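/- The R2 indicator of the concave Pareto front {(t, √(1−t²)) : t ∈ [0,1]} equals (1/8)·(3·√2·arcsinh(1) − 2). -/

import Mathlib

open Real

private lemma quad_pos (w : ℝ) : 0 < 2*w^2 - 2*w + 1 := by nlinarith [sq_nonneg (2*w-1)]

private lemma inf_eq (w : ℝ) (h0 : 0 ≤ w) (h1 : w ≤ 1) :
    (⨅ t : Set.Icc (0:ℝ) 1, max (w * (t : ℝ)) ((1 - w) * Real.sqrt (1 - (t : ℝ)^2)))
      = w * (1 - w) / Real.sqrt (2*w^2 - 2*w + 1) := by
  haveI : Nonempty (Set.Icc (0:ℝ) 1) := ⟨⟨0, by norm_num⟩⟩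
  have hq := quad_pos w
  set s := Real.sqrt (2*w^2 - 2*w + 1) with hs
  have hspos : 0 < s := Real.sqrt_pos.2 hq
  have hs2 : s^2 = 2*w^2 - 2*w + 1 := Real.sq_sqrt hq.le
  have hw1 : (0:ℝ) ≤ 1 - w := by linarith
  have hles : 1 - w ≤ s := by nlinarith [sq_nonneg w]
  have htmem : (1 - w)/s ∈ Set.Icc (0:ℝ) 1 := by
    constructor
    · positivity
    · rw [div_le_one hspos]; exact hles
  have hkey : 1 - ((1-w)/s)^2 = (w/s)^2 := by
    field_simp
    nlinarith [hs2]
  have hsq : Real.sqrt (1 - ((1-w)/s)^2) = w/s := by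
    rw [hkey, Real.sqrt_sq (div_nonneg h0 hspos.le)]
  have hbdd : BddBelow (Set.range fun t : Set.Icc (0:ℝ) 1 =>
      max (w * (t : ℝ)) ((1 - w) * Real.sqrt (1 - (t : ℝ)^2))) := by
    refine ⟨0, ?_⟩
    rintro _ ⟨⟨t, ht0, ht1⟩, rfl⟩
    exact le_max_of_le_left (mul_nonneg h0 ht0)
  apply le_antisymm
  · refine (ciInf_le hbdd ⟨(1-w)/s, htmem⟩).trans_eq ?_
    simp only [hsq]
    rw [show w * ((1-w)/s) = w*(1-w)/s by ring, show (1-w)*(w/s) = w*(1-w)/s by ring,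
      max_self]
  · refine le_ciInf ?_
    rintro ⟨t, ht0, ht1⟩
    rcases le_total ((1-w)/s) t with h | h
    · refine le_max_of_le_left ?_
      calc w*(1-w)/s = w * ((1-w)/s) := by ring
        _ ≤ w * t := mul_le_mul_of_nonneg_left h h0
    · refine le_max_of_le_right ?_
      have ht2 : t^2 ≤ ((1-w)/s)^2 := pow_le_pow_left₀ ht0 h 2
      have h2 : (w/s)^2 ≤ 1 - t^2 := by rw [← hkey]; linarith
      have h3 : w/s ≤ Real.sqrt (1 - t^2) := by
        rw [show w/s = Real.sqrt ((w/s)^2) from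
          (Real.sqrt_sq (div_nonneg h0 hspos.le)).symm]
        exact Real.sqrt_le_sqrt h2
      calc w*(1-w)/s = (1-w) * (w/s) := by ring
        _ ≤ (1-w) * Real.sqrt (1 - t^2) := mul_le_mul_of_nonneg_left h3 hw1

private noncomputable def F (w : ℝ) : ℝ :=
  3/(8*Real.sqrt 2) * Real.arsinh (2*w - 1) - (2*w - 1) * Real.sqrt (2*w^2 - 2*w + 1)/8

private lemma F_deriv (w : ℝ) :
    HasDerivAt F (w * (1 - w) / Real.sqrt (2*w^2 - 2*w + 1)) w := by
  have hq := quad_pos w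
  have hspos : 0 < Real.sqrt (2*w^2 - 2*w + 1) := Real.sqrt_pos.2 hq
  have hs2 : Real.sqrt (2*w^2 - 2*w + 1)^2 = 2*w^2 - 2*w + 1 := Real.sq_sqrt hq.le
  have h2 : Real.sqrt 2 * Real.sqrt 2 = 2 := Real.mul_self_sqrt (by norm_num)
  have h2pos : (0:ℝ) < Real.sqrt 2 := Real.sqrt_pos.2 (by norm_num)
  -- inner linear map
  have hlin : HasDerivAt (fun w : ℝ => 2*w - 1) 2 w := by
    simpa using ((hasDerivAt_id w).const_mul 2).sub_const 1
  have harsinh : HasDerivAt (fun w : ℝ => Real.arsinh (2*w - 1))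
      ((Real.sqrt (1 + (2*w-1)^2))⁻¹ * 2) w := by
    simpa [smul_eq_mul] using hlin.arsinh
  have hpoly : HasDerivAt (fun w : ℝ => 2*w^2 - 2*w + 1) (4*w - 2) w := by
    have h := (((hasDerivAt_pow 2 w).const_mul 2).sub ((hasDerivAt_id w).const_mul 2)).add_const 1
    simp only [id] at h
    exact h.congr_deriv (by norm_num; ring)
  have hsqrt : HasDerivAt (fun w : ℝ => Real.sqrt (2*w^2 - 2*w + 1))
      ((2 * Real.sqrt (2*w^2 - 2*w + 1))⁻¹ * (4*w - 2)) w := by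
    convert hpoly.sqrt hq.ne' using 1
    ring
  have hF := ((harsinh.const_mul (3/(8*Real.sqrt 2)))).sub ((hlin.mul hsqrt).div_const 8)
  refine hF.congr_deriv (Eq.symm ?_)
  have hone : Real.sqrt (1 + (2*w-1)^2) = Real.sqrt 2 * Real.sqrt (2*w^2 - 2*w + 1) := by
    rw [← Real.sqrt_mul (by norm_num : (0:ℝ) ≤ 2)]
    congr 1; ring
  rw [hone]
  have key : 3/(8*Real.sqrt 2) * ((Real.sqrt 2 * Real.sqrt (2*w^2-2*w+1))⁻¹ * 2)
      = 3/(8*Real.sqrt (2*w^2-2*w+1)) := by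
    rw [mul_inv]
    field_simp
    rw [sq, h2]
  rw [key]
  have hs0 := hspos.ne'
  generalize Real.sqrt (2*w^2 - 2*w + 1) = s at hs2 hs0 ⊢
  field_simp
  linear_combination 4 * hs2

theorem r2_concave_front :
    (∫ w in (0:ℝ)..1,
        ⨅ t : Set.Icc (0:ℝ) 1, max (w * (t : ℝ)) ((1 - w) * Real.sqrt (1 - (t : ℝ)^2)))
      = (1/8) * (3 * Real.sqrt 2 * Real.arsinh 1 - 2) := by
  have hcongr : (∫ w in (0:ℝ)..1,
        ⨅ t : Set.Icc (0:ℝ) 1, max (w * (t : ℝ)) ((1 - w) * Real.sqrt (1 - (t : ℝ)^2)))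
      = ∫ w in (0:ℝ)..1, w * (1 - w) / Real.sqrt (2*w^2 - 2*w + 1) := by
    apply intervalIntegral.integral_congr
    intro w hw
    rw [Set.uIcc_of_le (by norm_num : (0:ℝ) ≤ 1)] at hw
    exact inf_eq w hw.1 hw.2
  rw [hcongr]
  have hcont : Continuous (fun w : ℝ => w * (1 - w) / Real.sqrt (2*w^2 - 2*w + 1)) := by
    apply Continuous.div
    · continuity
    · continuity
    · intro w
      exact (Real.sqrt_pos.2 (quad_pos w)).ne'
  have := intervalIntegral.integral_eq_sub_of_hasDerivAt
    (fun w _ => F_deriv w) (hcont.intervalIntegrable 0 1)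
  rw [this]
  have h2 : Real.sqrt 2 * Real.sqrt 2 = 2 := Real.mul_self_sqrt (by norm_num)
  have h2pos : (0:ℝ) < Real.sqrt 2 := Real.sqrt_pos.2 (by norm_num)
  simp only [F]
  norm_num
  field_simp
  grind
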